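/- For any fixed φ ∈ ℝ, the identity W(P⃗)^† W'(P⃗) = e^{iφ} C_{m:0} (C'_{m:0})^† holds for all P⃗ ∈ 𝒫^m if and only if both of the following hold: C'_{m:0} = e^{iφ} C_{m:0}, and W(P⃗) = W'(P⃗) for all P⃗ ∈ 𝒫^m. -/

import Mathlib

open Matrix Complex

noncomputable section

namespace QEC

/-- The space of `n`-qubit operators: `2^n × 2^n` complex matrices, with the
index set realized as `Fin n → Fin 2`. -/
abbrev QMat (n : ℕ) := Matrix (Fin n → Fin 2) (Fin n → Fin 2) ℂ

/-- The Pauli `X` matrix. -/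
def PX : Matrix (Fin 2) (Fin 2) ℂ := !![0, 1; 1, 0]

/-- The Pauli `Y` matrix. -/
def PY : Matrix (Fin 2) (Fin 2) ℂ := !![0, -Complex.I; Complex.I, 0]

/-- The Pauli `Z` matrix. -/
def PZ : Matrix (Fin 2) (Fin 2) ℂ := !![1, 0; 0, -1]

/-- The four single-qubit Pauli matrices `𝒫 = {I, X, Y, Z}`, indexed by `Fin 4`. -/
def pauli : Fin 4 → Matrix (Fin 2) (Fin 2) ℂ := ![1, PX, PY, PZ]

/-- `A^{(k)} = I^{⊗(k-1)} ⊗ A ⊗ I^{⊗(n-k)}`: the single-qubit operator `A`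
acting on the `k`-th qubit of an `n`-qubit system. -/
def embed {n : ℕ} (k : Fin n) (A : Matrix (Fin 2) (Fin 2) ℂ) : QMat n :=
  fun x y => A (x k) (y k) * ∏ q ∈ Finset.univ.erase k, (if x q = y q then (1 : ℂ) else 0)

/-- The Kronecker product `P 0 ⊗ P 1 ⊗ ⋯ ⊗ P (n-1)` of `n` single-qubit operators. -/
def kron {n : ℕ} (P : Fin n → Matrix (Fin 2) (Fin 2) ℂ) : QMat n :=
  fun x y => ∏ q, P q (x q) (y q)

/-- The circuit `F(A⃗) = C_m A_m^{(k_m)} C_{m-1} ⋯ C_1 A_1^{(k_1)} C_0`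
(here the layers are indexed by `Fin m`, with `i : Fin m` standing for layer `i+1`). -/
def circuit {n m : ℕ} (C : Fin (m + 1) → QMat n) (k : Fin m → Fin n)
    (A : Fin m → Matrix (Fin 2) (Fin 2) ℂ) : QMat n :=
  ((List.ofFn fun i : Fin m => C i.succ * embed (k i) (A i)).reverse).prod * C 0

/-- The cumulative product `C_{m:i} = C_m C_{m-1} ⋯ C_i`. -/
def Ccum {n m : ℕ} (C : Fin (m + 1) → QMat n) (i : Fin (m + 1)) : QMat n :=
  (((List.ofFn C).reverse).take (m + 1 - (i : ℕ))).prod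

/-- `V_i(P) = C_{m:i} P^{(k_i)} C_{m:i}^†` (with `i : Fin m` standing for layer `i+1`). -/
def Vop {n m : ℕ} (C : Fin (m + 1) → QMat n) (k : Fin m → Fin n) (i : Fin m)
    (P : Matrix (Fin 2) (Fin 2) ℂ) : QMat n :=
  Ccum C i.succ * embed (k i) P * (Ccum C i.succ)ᴴ

/-- `W(P⃗) = V_m(P_m) V_{m-1}(P_{m-1}) ⋯ V_1(P_1)`. -/
def Wop {n m : ℕ} (C : Fin (m + 1) → QMat n) (k : Fin m → Fin n)
    (P : Fin m → Matrix (Fin 2) (Fin 2) ℂ) : QMat n :=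
  ((List.ofFn fun i : Fin m => Vop C k i (P i)).reverse).prod

/-- The global phase `e^{iφ}`. -/
def phase (φ : ℝ) : ℂ := Complex.exp ((φ : ℂ) * Complex.I)

/-- A unitary `C` is Clifford when it maps every Pauli string to a signed Pauli
string under conjugation. -/
def IsClifford {n : ℕ} (C : QMat n) : Prop :=
  ∀ Q : Fin n → Fin 4, ∃ (ε : ℂ) (Q' : Fin n → Fin 4), (ε = 1 ∨ ε = -1) ∧
    C * kron (fun q => pauli (Q q)) * Cᴴ = ε • kron (fun q => pauli (Q' q))

-- auxiliary lemmas

lemma kron_mul {n : ℕ} (P Q : Fin n → Matrix (Fin 2) (Fin 2) ℂ) :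
    kron P * kron Q = kron (fun q => P q * Q q) := by
  ext x y
  simp only [kron, Matrix.mul_apply]
  rw [Fintype.prod_sum (fun q (a : Fin 2) => P q (x q) a * Q q a (y q))]
  simp [Finset.prod_mul_distrib]

lemma kron_conjTranspose {n : ℕ} (P : Fin n → Matrix (Fin 2) (Fin 2) ℂ) :
    (kron P)ᴴ = kron (fun q => (P q)ᴴ) := by
  ext x y
  simp [kron, conjTranspose_apply, map_prod]

lemma kron_one {n : ℕ} : kron (fun _ : Fin n => (1 : Matrix (Fin 2) (Fin 2) ℂ)) = 1 := by
  ext x y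
  simp only [kron, Matrix.one_apply]
  by_cases h : x = y
  · subst h; simp
  · rw [if_neg h]
    obtain ⟨q, hq⟩ := Function.ne_iff.mp h
    exact Finset.prod_eq_zero (Finset.mem_univ q) (by simp [hq])

lemma embed_eq_kron {n : ℕ} (k : Fin n) (A : Matrix (Fin 2) (Fin 2) ℂ) :
    embed k A = kron (Function.update (fun _ => 1) k A) := by
  ext x y
  simp only [embed, kron]
  rw [← Finset.mul_prod_erase _ _ (Finset.mem_univ k), Function.update_self]
  congr 1
  refine Finset.prod_congr rfl fun q hq => ?_
  rw [Function.update_of_ne (Finset.ne_of_mem_erase hq), Matrix.one_apply]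

lemma embed_unitary {n : ℕ} (k : Fin n) {A : Matrix (Fin 2) (Fin 2) ℂ}
    (hA : A ∈ Matrix.unitaryGroup (Fin 2) ℂ) :
    embed k A ∈ Matrix.unitaryGroup (Fin n → Fin 2) ℂ := by
  rw [Matrix.mem_unitaryGroup_iff] at hA ⊢
  rw [embed_eq_kron, star_eq_conjTranspose, kron_conjTranspose, kron_mul, ← kron_one]
  have : (fun q => Function.update (fun _ => (1 : Matrix (Fin 2) (Fin 2) ℂ)) k A q *
      (Function.update (fun _ => (1 : Matrix (Fin 2) (Fin 2) ℂ)) k A q)ᴴ) =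
      fun _ => (1 : Matrix (Fin 2) (Fin 2) ℂ) := by
    funext q
    by_cases h : q = k
    · subst h; simpa [star_eq_conjTranspose] using hA
    · simp [Function.update_of_ne h]
  rw [this]

lemma pauli_unitary (j : Fin 4) : pauli j ∈ Matrix.unitaryGroup (Fin 2) ℂ := by
  rw [Matrix.mem_unitaryGroup_iff]
  fin_cases j <;>
    · ext a b
      fin_cases a <;> fin_cases b <;>
        simp [pauli, PX, PY, PZ, Matrix.mul_apply, Fin.sum_univ_two, Matrix.one_apply,
          star_eq_conjTranspose, Matrix.conjTranspose_apply, Complex.ext_iff]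

lemma embed_one {n : ℕ} (k : Fin n) : embed k (1 : Matrix (Fin 2) (Fin 2) ℂ) = 1 := by
  rw [embed_eq_kron, ← kron_one]
  have : Function.update (fun _ => (1 : Matrix (Fin 2) (Fin 2) ℂ)) k 1 =
      fun _ => (1 : Matrix (Fin 2) (Fin 2) ℂ) := by
    funext q; by_cases h : q = k <;> simp [h]
  rw [this]

lemma Ccum_unitary {n m : ℕ} (C : Fin (m + 1) → QMat n)
    (hC : ∀ i, C i ∈ Matrix.unitaryGroup (Fin n → Fin 2) ℂ) (i : Fin (m + 1)) :
    Ccum C i ∈ Matrix.unitaryGroup (Fin n → Fin 2) ℂ := by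
  refine Submonoid.list_prod_mem _ fun A hA => ?_
  have : A ∈ List.ofFn C := List.mem_reverse.mp (List.mem_of_mem_take hA)
  obtain ⟨j, hj⟩ := List.mem_ofFn.mp this
  exact hj ▸ hC j

lemma Wop_unitary {n m : ℕ} (C : Fin (m + 1) → QMat n)
    (hC : ∀ i, C i ∈ Matrix.unitaryGroup (Fin n → Fin 2) ℂ) (k : Fin m → Fin n)
    (p : Fin m → Fin 4) :
    Wop C k (fun i => pauli (p i)) ∈ Matrix.unitaryGroup (Fin n → Fin 2) ℂ := by
  refine Submonoid.list_prod_mem _ fun A hA => ?_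
  rw [List.mem_reverse] at hA
  obtain ⟨j, hj⟩ := List.mem_ofFn.mp hA
  subst hj
  have hc := Ccum_unitary C hC j.succ
  exact mul_mem (mul_mem hc (embed_unitary _ (pauli_unitary _)))
    (Unitary.star_mem hc)

lemma Wop_id {n m : ℕ} (C : Fin (m + 1) → QMat n)
    (hC : ∀ i, C i ∈ Matrix.unitaryGroup (Fin n → Fin 2) ℂ) (k : Fin m → Fin n) :
    Wop C k (fun _ => pauli 0) = 1 := by
  apply List.prod_eq_one
  intro A hA
  rw [List.mem_reverse] at hA
  obtain ⟨j, hj⟩ := List.mem_ofFn.mp hA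
  subst hj
  have h0 : pauli 0 = (1 : Matrix (Fin 2) (Fin 2) ℂ) := rfl
  simp only [Vop, h0, embed_one, mul_one]
  exact Matrix.mem_unitaryGroup_iff.mp (Ccum_unitary C hC j.succ)

lemma phase_mul_star (φ : ℝ) : phase φ * star (phase φ) = 1 := by
  rw [phase, RCLike.star_def, ← Complex.exp_conj, ← Complex.exp_add, _root_.map_mul,
    Complex.conj_ofReal, Complex.conj_I]
  ring_nf
  exact Complex.exp_zero


/-- For a fixed phase `φ`, `W(P⃗)^† W'(P⃗) = e^{iφ} C_{m:0} (C'_{m:0})^†` for all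
`P⃗ ∈ 𝒫^m` iff both `C'_{m:0} = e^{iφ} C_{m:0}` and `W(P⃗) = W'(P⃗)` for all `P⃗ ∈ 𝒫^m`. -/
theorem stmt5 (n m : ℕ) (hn : 1 ≤ n) (hm : 1 ≤ m)
    (C C' : Fin (m + 1) → QMat n)
    (hC : ∀ i, C i ∈ Matrix.unitaryGroup (Fin n → Fin 2) ℂ)
    (hC' : ∀ i, C' i ∈ Matrix.unitaryGroup (Fin n → Fin 2) ℂ)
    (k l : Fin m → Fin n) (φ : ℝ) :
    (∀ p : Fin m → Fin 4,
        (Wop C k (fun i => pauli (p i)))ᴴ * Wop C' l (fun i => pauli (p i)) =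
          phase φ • (Ccum C 0 * (Ccum C' 0)ᴴ)) ↔
    (Ccum C' 0 = phase φ • Ccum C 0 ∧
      ∀ p : Fin m → Fin 4,
        Wop C k (fun i => pauli (p i)) = Wop C' l (fun i => pauli (p i))) := by
  have hW := fun p => Wop_unitary C hC k p
  have hCc := Ccum_unitary C hC 0
  have hCc' := Ccum_unitary C' hC' 0
  have hps := phase_mul_star φ
  have hCCm : Ccum C 0 * (Ccum C 0)ᴴ = 1 := by
    simpa [star_eq_conjTranspose] using Matrix.mem_unitaryGroup_iff.mp hCc
  have hCCm' : (Ccum C 0)ᴴ * Ccum C 0 = 1 := by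
    simpa [star_eq_conjTranspose] using Matrix.mem_unitaryGroup_iff'.mp hCc
  constructor
  · intro H
    have h0 := H (fun _ => 0)
    rw [Wop_id C hC k, Wop_id C' hC' l, Matrix.conjTranspose_one, one_mul] at h0
    have h1 : (Ccum C 0)ᴴ = phase φ • (Ccum C' 0)ᴴ := by
      calc (Ccum C 0)ᴴ = (Ccum C 0)ᴴ * 1 := (mul_one _).symm
        _ = (Ccum C 0)ᴴ * (phase φ • (Ccum C 0 * (Ccum C' 0)ᴴ)) := by rw [← h0]
        _ = phase φ • ((Ccum C 0)ᴴ * Ccum C 0 * (Ccum C' 0)ᴴ) := by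
            rw [Matrix.mul_smul, mul_assoc]
        _ = phase φ • (Ccum C' 0)ᴴ := by rw [hCCm', one_mul]
    have h2 := congrArg Matrix.conjTranspose h1
    rw [Matrix.conjTranspose_conjTranspose, Matrix.conjTranspose_smul,
      Matrix.conjTranspose_conjTranspose] at h2
    have key : Ccum C' 0 = phase φ • Ccum C 0 := by
      rw [h2, smul_smul, hps, one_smul]
    refine ⟨key, fun p => ?_⟩
    have hid : (Wop C k (fun i => pauli (p i)))ᴴ * Wop C' l (fun i => pauli (p i)) = 1 := by
      rw [H p, key, Matrix.conjTranspose_smul, Matrix.mul_smul, smul_smul, hCCm,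
        hps, one_smul]
    have h3 : Wop C k (fun i => pauli (p i)) *
        ((Wop C k (fun i => pauli (p i)))ᴴ * Wop C' l (fun i => pauli (p i))) =
        Wop C k (fun i => pauli (p i)) * 1 := by rw [hid]
    have hWW : Wop C k (fun i => pauli (p i)) * (Wop C k (fun i => pauli (p i)))ᴴ = 1 := by
      simpa [star_eq_conjTranspose] using Matrix.mem_unitaryGroup_iff.mp (hW p)
    rw [← mul_assoc, hWW, one_mul, mul_one] at h3
    exact h3.symm
  · rintro ⟨h1, h2⟩ p
    have hWW' : (Wop C k (fun i => pauli (p i)))ᴴ * Wop C k (fun i => pauli (p i)) = 1 := by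
      simpa [star_eq_conjTranspose] using Matrix.mem_unitaryGroup_iff'.mp (hW p)
    rw [← h2 p, hWW', h1, Matrix.conjTranspose_smul, Matrix.mul_smul, smul_smul, hCCm,
      hps, one_smul]

end QEC
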